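/- arXiv:1803.09910 — 3 statements merged into one kernel-verified Lean document; each statement's English description precedes it below -/
import Mathlib

section
/- For every v > 0 and b ∈ ℝ, the Gaussian integral identity ∫_ℝ e^{−bz − b²v/2} · (|z|/√(2πv³)) · e^{−z²/(2v)} dz = √(2/(πv)) · e^{−b²v/2} + b·(2Φ(b√v) − 1) holds. Consequently, for 0 < u < t, multiplying the left-hand side with v = t − u by e^{−b²u/2}/√(2πu) yields ψ_t(u) = (e^{−b²u/2}/(π√(u(t−u)))) · [e^{−b²(t−u)/2} + (b/2)√(2π(t−u))·(2Φ(b√(t−u)) − 1)]. -/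
open MeasureTheory

/-- The standard normal cumulative distribution function `Φ`. -/
noncomputable def Phi (y : ℝ) : ℝ :=
  ∫ z in Set.Iic y, Real.exp (-z ^ 2 / 2) / Real.sqrt (2 * Real.pi)

open Real Set Filter Topology

lemma phi_eq (z : ℝ) : Real.exp (-z ^ 2 / 2) / Real.sqrt (2 * Real.pi)
    = Real.exp (-(1/2) * z ^ 2) / Real.sqrt (2 * Real.pi) := by ring_nf

lemma integrable_phi : Integrable (fun z : ℝ => Real.exp (-z ^ 2 / 2) / Real.sqrt (2 * Real.pi)) := by
  simp_rw [phi_eq, div_eq_mul_inv]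
  exact (integrable_exp_neg_mul_sq (by norm_num)).mul_const _

lemma cont_phi : Continuous (fun z : ℝ => Real.exp (-z ^ 2 / 2) / Real.sqrt (2 * Real.pi)) := by
  fun_prop

lemma integral_phi : ∫ z : ℝ, Real.exp (-z ^ 2 / 2) / Real.sqrt (2 * Real.pi) = 1 := by
  simp_rw [phi_eq, div_eq_mul_inv]
  rw [integral_mul_const, integral_gaussian]
  rw [show Real.pi / (1 * 2⁻¹) = 2 * Real.pi by ring]
  rw [mul_inv_cancel₀ (Real.sqrt_ne_zero'.mpr (by positivity))]

lemma Phi_eq (y : ℝ) : Phi y = Phi 0 + ∫ z in (0:ℝ)..y, Real.exp (-z ^ 2 / 2) / Real.sqrt (2 * Real.pi) := by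
  have h := intervalIntegral.integral_Iic_sub_Iic (μ := volume)
    (f := fun z : ℝ => Real.exp (-z ^ 2 / 2) / Real.sqrt (2 * Real.pi)) (a := (0:ℝ)) (b := y)
    integrable_phi.integrableOn integrable_phi.integrableOn
  simp only [Phi]
  linarith

lemma hasDerivAt_Phi (y : ℝ) :
    HasDerivAt Phi (Real.exp (-y ^ 2 / 2) / Real.sqrt (2 * Real.pi)) y := by
  have hfun : Phi = fun u => Phi 0 + ∫ z in (0:ℝ)..u, Real.exp (-z ^ 2 / 2) / Real.sqrt (2 * Real.pi) :=
    funext Phi_eq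
  rw [hfun]
  exact (intervalIntegral.integral_hasDerivAt_right
    (integrable_phi.intervalIntegrable)
    (cont_phi.stronglyMeasurableAtFilter _ _) cont_phi.continuousAt).const_add _

lemma tendsto_Phi_atTop : Tendsto Phi atTop (𝓝 1) := by
  have h := intervalIntegral_tendsto_integral_Ioi (0:ℝ)
    (f := fun z : ℝ => Real.exp (-z ^ 2 / 2) / Real.sqrt (2 * Real.pi))
    (integrable_phi.integrableOn) tendsto_id
  have heq : Phi 0 + ∫ z in Ioi (0:ℝ), Real.exp (-z ^ 2 / 2) / Real.sqrt (2 * Real.pi) = 1 := by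
    rw [Phi, ← Set.compl_Iic]
    rw [integral_add_compl measurableSet_Iic integrable_phi, integral_phi]
  have := (tendsto_const_nhds (x := Phi 0)).add h
  rw [heq] at this
  refine this.congr fun y => (Phi_eq y).symm

lemma Phi_neg (x : ℝ) : Phi (-x) = 1 - Phi x := by
  have h1 : Phi (-x) = ∫ z in Ioi x, Real.exp (-z ^ 2 / 2) / Real.sqrt (2 * Real.pi) := by
    rw [Phi]
    calc ∫ z in Iic (-x), Real.exp (-z ^ 2 / 2) / Real.sqrt (2 * Real.pi)
        = ∫ z in Iic (-x), Real.exp (-(-z) ^ 2 / 2) / Real.sqrt (2 * Real.pi) :=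
          setIntegral_congr_fun measurableSet_Iic fun z _ => by ring_nf
      _ = ∫ z in Ioi (-(-x)), Real.exp (-z ^ 2 / 2) / Real.sqrt (2 * Real.pi) :=
          integral_comp_neg_Iic (-x) (fun z => Real.exp (-z ^ 2 / 2) / Real.sqrt (2 * Real.pi))
      _ = ∫ z in Ioi x, Real.exp (-z ^ 2 / 2) / Real.sqrt (2 * Real.pi) := by rw [neg_neg]
  have h2 : Phi x + ∫ z in Ioi x, Real.exp (-z ^ 2 / 2) / Real.sqrt (2 * Real.pi) = 1 := by
    rw [Phi, ← Set.compl_Iic, integral_add_compl measurableSet_Iic integrable_phi, integral_phi]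
  linarith [h1, h2]

lemma integrable_abs_gauss (v c : ℝ) (hv : 0 < v) :
    Integrable (fun z : ℝ => |z| * Real.exp (-(z + c) ^ 2 / (2 * v))) := by
  have hb : (0:ℝ) < 1/(2*v) := by positivity
  have h0 : Integrable (fun x : ℝ => x * Real.exp (-(1/(2*v)) * x ^ 2)) := by
    simpa [Real.rpow_one] using integrable_rpow_mul_exp_neg_mul_sq hb (s := 1) (by norm_num)
  have h1 : Integrable (fun x : ℝ => |x| * Real.exp (-(1/(2*v)) * x ^ 2)) := by
    refine h0.abs.congr ?_
    filter_upwards with x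
    rw [abs_mul, abs_of_pos (Real.exp_pos _)]
  have h2 : Integrable (fun x : ℝ => |c| * Real.exp (-(1/(2*v)) * x ^ 2)) :=
    (integrable_exp_neg_mul_sq hb).const_mul _
  have hshift : Integrable (fun w : ℝ => |w - c| * Real.exp (-(1/(2*v)) * w ^ 2)) := by
    refine (h1.add h2).mono' ?_ ?_
    · exact ((continuous_abs.comp (continuous_id.sub continuous_const)).mul
        (Real.continuous_exp.comp (by fun_prop))).aestronglyMeasurable
    · filter_upwards with w
      have h3 : |w - c| ≤ |w| + |c| := abs_sub w c
      have h4 : (0:ℝ) < Real.exp (-(1/(2*v)) * w ^ 2) := Real.exp_pos _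
      rw [Real.norm_eq_abs, abs_mul, abs_of_pos h4, abs_abs]
      simp only [Pi.add_apply]
      nlinarith [abs_nonneg w, abs_nonneg c]
  have := hshift.comp_add_right c
  refine this.congr ?_
  filter_upwards with z
  have : z + c - c = z := by ring
  rw [this]
  congr 1
  rw [show -(1/(2*v)) * (z + c) ^ 2 = -(z + c) ^ 2 / (2 * v) by ring]

lemma key (v c : ℝ) (hv : 0 < v) :
    ∫ z in Ioi (0:ℝ), z * Real.exp (-(z + c) ^ 2 / (2 * v)) =
      v * Real.exp (-c ^ 2 / (2 * v))
        + c * Real.sqrt (2 * Real.pi * v) * (Phi (c / Real.sqrt v) - 1) := by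
  have hsv : (0:ℝ) < Real.sqrt v := Real.sqrt_pos.mpr hv
  have hs2pi : (0:ℝ) < Real.sqrt (2 * Real.pi) := Real.sqrt_pos.mpr (by positivity)
  set F : ℝ → ℝ := fun z => -v * Real.exp (-(z + c) ^ 2 / (2 * v))
      - c * Real.sqrt (2 * Real.pi * v) * Phi ((z + c) / Real.sqrt v) with hF
  have hderiv : ∀ x ∈ Ici (0:ℝ), HasDerivAt F (x * Real.exp (-(x + c) ^ 2 / (2 * v))) x := by
    intro x _
    have hid : HasDerivAt (fun z : ℝ => z + c) 1 x := (hasDerivAt_id x).add_const c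
    have h1 : HasDerivAt (fun z : ℝ => -(z + c) ^ 2 / (2 * v)) (-(x + c) / v) x := by
      have := ((hid.pow 2).neg.div_const (2*v))
      refine this.congr_deriv ?_
      field_simp
      ring
    have h2 : HasDerivAt (fun z : ℝ => -v * Real.exp (-(z + c) ^ 2 / (2 * v)))
        ((x + c) * Real.exp (-(x + c) ^ 2 / (2 * v))) x := by
      have := (h1.exp).const_mul (-v)
      refine this.congr_deriv ?_
      field_simp
    have h3 : HasDerivAt (fun z : ℝ => (z + c) / Real.sqrt v) (1 / Real.sqrt v) x := by
      simpa using hid.div_const (Real.sqrt v)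
    have h4 : HasDerivAt (fun z : ℝ => Phi ((z + c) / Real.sqrt v))
        (Real.exp (-((x + c) / Real.sqrt v) ^ 2 / 2) / Real.sqrt (2 * Real.pi) * (1 / Real.sqrt v)) x :=
      by have := (hasDerivAt_Phi ((x + c) / Real.sqrt v)).comp x h3; exact this
    have h5 := h2.sub (h4.const_mul (c * Real.sqrt (2 * Real.pi * v)))
    refine h5.congr_deriv ?_
    have e1 : ((x + c) / Real.sqrt v) ^ 2 = (x + c) ^ 2 / v := by
      rw [div_pow, Real.sq_sqrt hv.le]
    have e2 : Real.sqrt (2 * Real.pi * v) = Real.sqrt (2 * Real.pi) * Real.sqrt v :=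
      Real.sqrt_mul (by positivity) v
    rw [e1, e2, show -((x + c) ^ 2 / v) / 2 = -(x + c) ^ 2 / (2 * v) by ring]
    field_simp
    ring
  have hint : IntegrableOn (fun z : ℝ => z * Real.exp (-(z + c) ^ 2 / (2 * v))) (Ioi (0:ℝ)) :=
    ((integrable_abs_gauss v c hv).integrableOn).congr_fun
      (fun z hz => by dsimp only; rw [abs_of_pos hz]) measurableSet_Ioi
  have htend : Tendsto F atTop (𝓝 (-(c * Real.sqrt (2 * Real.pi * v)))) := by
    have t1 : Tendsto (fun z : ℝ => -(z + c) ^ 2 / (2 * v)) atTop atBot := by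
      apply Tendsto.atBot_div_const (by positivity)
      apply tendsto_neg_atBot_iff.mpr
      exact (tendsto_pow_atTop (two_ne_zero)).comp (tendsto_atTop_add_const_right atTop c tendsto_id)
    have t2 : Tendsto (fun z : ℝ => -v * Real.exp (-(z + c) ^ 2 / (2 * v))) atTop (𝓝 0) := by
      have := (Real.tendsto_exp_atBot.comp t1).const_mul (-v)
      simpa using this
    have t3 : Tendsto (fun z : ℝ => (z + c) / Real.sqrt v) atTop atTop :=
      (tendsto_atTop_add_const_right atTop c tendsto_id).atTop_div_const hsv
    have t4 : Tendsto (fun z : ℝ => c * Real.sqrt (2 * Real.pi * v) * Phi ((z + c) / Real.sqrt v))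
        atTop (𝓝 (c * Real.sqrt (2 * Real.pi * v) * 1)) :=
      (tendsto_Phi_atTop.comp t3).const_mul _
    have t5 := t2.sub t4
    rw [show (0:ℝ) - c * Real.sqrt (2 * Real.pi * v) * 1 = -(c * Real.sqrt (2 * Real.pi * v)) by ring] at t5
    exact t5
  have := integral_Ioi_of_hasDerivAt_of_tendsto' hderiv hint htend
  rw [this, hF]
  simp only [zero_add]
  ring

lemma gauss_abs (b v : ℝ) (hv : 0 < v) :
    ∫ z : ℝ, |z| * Real.exp (-(z + b * v) ^ 2 / (2 * v)) =
      2 * v * Real.exp (-b ^ 2 * v / 2)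
        + b * v * Real.sqrt (2 * Real.pi * v) * (2 * Phi (b * Real.sqrt v) - 1) := by
  have hsv : (0:ℝ) < Real.sqrt v := Real.sqrt_pos.mpr hv
  set c : ℝ := b * v with hc
  have hsplit := integral_add_compl (measurableSet_Iic (a := (0:ℝ)))
    (integrable_abs_gauss v c hv)
  rw [compl_Iic] at hsplit
  have hIoi : ∫ z in Ioi (0:ℝ), |z| * Real.exp (-(z + c) ^ 2 / (2 * v))
      = v * Real.exp (-c ^ 2 / (2 * v))
        + c * Real.sqrt (2 * Real.pi * v) * (Phi (c / Real.sqrt v) - 1) := by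
    rw [← key v c hv]
    exact setIntegral_congr_fun measurableSet_Ioi fun z hz => by rw [abs_of_pos hz]
  have hIic : ∫ z in Iic (0:ℝ), |z| * Real.exp (-(z + c) ^ 2 / (2 * v))
      = v * Real.exp (-(-c) ^ 2 / (2 * v))
        + (-c) * Real.sqrt (2 * Real.pi * v) * (Phi ((-c) / Real.sqrt v) - 1) := by
    rw [← key v (-c) hv]
    calc ∫ z in Iic (0:ℝ), |z| * Real.exp (-(z + c) ^ 2 / (2 * v))
        = ∫ z in Iic (0:ℝ), |(-z)| * Real.exp (-((-z) + -c) ^ 2 / (2 * v)) := by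
          refine setIntegral_congr_fun measurableSet_Iic fun z _ => ?_
          rw [abs_neg]
          congr 2
          ring
      _ = ∫ z in Ioi (-(0:ℝ)), |z| * Real.exp (-(z + -c) ^ 2 / (2 * v)) :=
          integral_comp_neg_Iic (0:ℝ) (fun z => |z| * Real.exp (-(z + -c) ^ 2 / (2 * v)))
      _ = ∫ z in Ioi (0:ℝ), z * Real.exp (-(z + -c) ^ 2 / (2 * v)) := by
          rw [neg_zero]
          exact setIntegral_congr_fun measurableSet_Ioi fun z hz => by rw [abs_of_pos hz]
  have hc1 : c / Real.sqrt v = b * Real.sqrt v := by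
    rw [hc, div_eq_iff hsv.ne', mul_assoc, Real.mul_self_sqrt hv.le]
  have hc2 : -c ^ 2 / (2 * v) = -b ^ 2 * v / 2 := by
    rw [hc]
    field_simp
  have hc3 : (-c) / Real.sqrt v = -(b * Real.sqrt v) := by rw [neg_div, hc1]
  rw [hc1, hc2] at hIoi
  have hc2' : -(-c) ^ 2 / (2 * v) = -b ^ 2 * v / 2 := by
    rw [show -(-c) ^ 2 / (2 * v) = -c ^ 2 / (2 * v) by ring, hc2]
  rw [hc3, Phi_neg, hc2'] at hIic
  rw [← hsplit, hIoi, hIic]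
  ring

lemma sqrt_cube (v : ℝ) (hv : 0 < v) :
    Real.sqrt (2 * Real.pi * v ^ 3) = v * Real.sqrt (2 * Real.pi * v) := by
  rw [show 2 * Real.pi * v ^ 3 = (2 * Real.pi * v) * v ^ 2 by ring,
    Real.sqrt_mul (by positivity), Real.sqrt_sq hv.le]
  ring

lemma sqrt_two_div (v : ℝ) (hv : 0 < v) :
    Real.sqrt (2 / (Real.pi * v)) = 2 / Real.sqrt (2 * Real.pi * v) := by
  have hS : Real.sqrt (2 * Real.pi * v) ^ 2 = 2 * Real.pi * v :=
    Real.sq_sqrt (by positivity)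
  rw [show (2:ℝ) / (Real.pi * v) = (2 / Real.sqrt (2 * Real.pi * v)) ^ 2 by
    rw [div_pow, hS]; field_simp]
  exact Real.sqrt_sq (by positivity)

lemma part1 (b v : ℝ) (hv : 0 < v) :
    (∫ z : ℝ, Real.exp (-(b * z) - b ^ 2 * v / 2) *
        (|z| / Real.sqrt (2 * Real.pi * v ^ 3)) * Real.exp (-z ^ 2 / (2 * v))) =
      Real.sqrt (2 / (Real.pi * v)) * Real.exp (-b ^ 2 * v / 2) +
        b * (2 * Phi (b * Real.sqrt v) - 1) := by
  have hS : (0:ℝ) < Real.sqrt (2 * Real.pi * v) := Real.sqrt_pos.mpr (by positivity)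
  have hpt : ∀ z : ℝ, Real.exp (-(b * z) - b ^ 2 * v / 2) *
      (|z| / Real.sqrt (2 * Real.pi * v ^ 3)) * Real.exp (-z ^ 2 / (2 * v))
      = (Real.sqrt (2 * Real.pi * v ^ 3))⁻¹ * (|z| * Real.exp (-(z + b * v) ^ 2 / (2 * v))) := by
    intro z
    calc Real.exp (-(b * z) - b ^ 2 * v / 2) *
        (|z| / Real.sqrt (2 * Real.pi * v ^ 3)) * Real.exp (-z ^ 2 / (2 * v))
        = (Real.sqrt (2 * Real.pi * v ^ 3))⁻¹ *
            (|z| * (Real.exp (-(b * z) - b ^ 2 * v / 2) * Real.exp (-z ^ 2 / (2 * v)))) := by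
          ring
      _ = (Real.sqrt (2 * Real.pi * v ^ 3))⁻¹ * (|z| * Real.exp (-(z + b * v) ^ 2 / (2 * v))) := by
          rw [← Real.exp_add]
          congr 2
          field_simp
          ring
  simp only [hpt]
  rw [MeasureTheory.integral_const_mul, gauss_abs b v hv, sqrt_cube v hv, sqrt_two_div v hv]
  field_simp

/-- the Gaussian integral identity, and the resulting explicit formula for
the conditional last-passage-time density `ψ_t(u)`. -/
theorem stmt_0 (b : ℝ) :
    (∀ v : ℝ, 0 < v →
      (∫ z : ℝ, Real.exp (-(b * z) - b ^ 2 * v / 2) *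
          (|z| / Real.sqrt (2 * Real.pi * v ^ 3)) * Real.exp (-z ^ 2 / (2 * v))) =
        Real.sqrt (2 / (Real.pi * v)) * Real.exp (-b ^ 2 * v / 2) +
          b * (2 * Phi (b * Real.sqrt v) - 1)) ∧
    (∀ u t : ℝ, 0 < u → u < t →
      Real.exp (-b ^ 2 * u / 2) / Real.sqrt (2 * Real.pi * u) *
        (∫ z : ℝ, Real.exp (-(b * z) - b ^ 2 * (t - u) / 2) *
          (|z| / Real.sqrt (2 * Real.pi * (t - u) ^ 3)) *
            Real.exp (-z ^ 2 / (2 * (t - u)))) =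
      Real.exp (-b ^ 2 * u / 2) / (Real.pi * Real.sqrt (u * (t - u))) *
        (Real.exp (-b ^ 2 * (t - u) / 2) +
          b / 2 * Real.sqrt (2 * Real.pi * (t - u)) *
            (2 * Phi (b * Real.sqrt (t - u)) - 1))) := by
  constructor
  · exact fun v hv => part1 b v hv
  · intro u t hu hut
    have hv : (0:ℝ) < t - u := by linarith
    rw [part1 b (t - u) hv, sqrt_two_div (t - u) hv]
    have hw : Real.sqrt (2 * Real.pi) ^ 2 = 2 * Real.pi := Real.sq_sqrt (by positivity)
    have hwpos : (0:ℝ) < Real.sqrt (2 * Real.pi) := Real.sqrt_pos.mpr (by positivity)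
    have hsu : (0:ℝ) < Real.sqrt u := Real.sqrt_pos.mpr hu
    have hsv : (0:ℝ) < Real.sqrt (t - u) := Real.sqrt_pos.mpr hv
    rw [show 2 * Real.pi * u = (2 * Real.pi) * u by ring, Real.sqrt_mul (by positivity) u,
      show 2 * Real.pi * (t - u) = (2 * Real.pi) * (t - u) by ring,
      Real.sqrt_mul (by positivity) (t - u), Real.sqrt_mul hu.le (t - u)]
    set w := Real.sqrt (2 * Real.pi)
    set su := Real.sqrt u
    set sv := Real.sqrt (t - u)
    field_simp
    linear_combination (-(2 * Real.exp (-(b ^ 2 * (t - u) / 2)) + b * w * sv * (2 * Phi (b * sv) - 1))) * hw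
end

section
/- Let b ≤ 0 and s > 0. The function t ↦ ∫_0^s ψ_{s+t}(y) dy is strictly decreasing on (0, ∞). -/
open MeasureTheory

/-- The conditional density `ψ_T(u)` of the last-passage time prior to `T` of Brownian
motion through the line `a + b t`, given that the first passage occurs before `T`. -/
noncomputable def psi (b T u : ℝ) : ℝ :=
  Real.exp (-b ^ 2 * u / 2) / (Real.pi * Real.sqrt (u * (T - u))) *
    (Real.exp (-b ^ 2 * (T - u) / 2) +
      b / 2 * Real.sqrt (2 * Real.pi * (T - u)) * (2 * Phi (b * Real.sqrt (T - u)) - 1))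

noncomputable def phid (z : ℝ) : ℝ := Real.exp (-z ^ 2 / 2) / Real.sqrt (2 * Real.pi)

lemma cont_phid : Continuous phid := by
  unfold phid; fun_prop

lemma integrable_phid : Integrable phid := by
  have h : Integrable (fun z : ℝ => Real.exp (-(1/2) * z ^ 2)) := integrable_exp_neg_mul_sq (by norm_num)
  have := h.div_const (Real.sqrt (2 * Real.pi))
  refine this.congr (Filter.Eventually.of_forall fun z => ?_)
  unfold phid; ring_nf

lemma hasDerivAt_Phi_s3 (y : ℝ) : HasDerivAt Phi (phid y) y := by
  have hPhi : ∀ x : ℝ, Phi x = (∫ z in Set.Iic (0:ℝ), phid z) + ∫ z in (0:ℝ)..x, phid z := by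
    intro x
    have := intervalIntegral.integral_Iic_sub_Iic (f := phid) (μ := volume) (a := (0:ℝ)) (b := x)
      integrable_phid.integrableOn integrable_phid.integrableOn
    unfold Phi phid at *
    linarith [this]
  have h2 : HasDerivAt (fun x => (∫ z in Set.Iic (0:ℝ), phid z) + ∫ z in (0:ℝ)..x, phid z) (phid y) y := by
    refine HasDerivAt.const_add _ ?_
    exact (intervalIntegral.integral_hasStrictDerivAt_right
      integrable_phid.intervalIntegrable
      (cont_phid.stronglyMeasurableAtFilter _ _) cont_phid.continuousAt).hasDerivAt
  exact (funext hPhi ▸ h2 : HasDerivAt Phi (phid y) y)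

noncomputable def hfun (b v : ℝ) : ℝ :=
  (Real.exp (-b ^ 2 * v / 2) +
    b / 2 * Real.sqrt (2 * Real.pi * v) * (2 * Phi (b * Real.sqrt v) - 1)) / Real.sqrt v

lemma hasDerivAt_hfun (b : ℝ) {v : ℝ} (hv : 0 < v) :
    HasDerivAt (hfun b) (-Real.exp (-b ^ 2 * v / 2) / (2 * v * Real.sqrt v)) v := by
  have hr : (0:ℝ) < Real.sqrt v := Real.sqrt_pos.2 hv
  have hr2 : Real.sqrt v ^ 2 = v := Real.sq_sqrt hv.le
  have hpi : (0:ℝ) < Real.sqrt (2 * Real.pi) := Real.sqrt_pos.2 (by positivity)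
  -- derivative of sqrt
  have hS : HasDerivAt Real.sqrt (1 / (2 * Real.sqrt v)) v := Real.hasDerivAt_sqrt hv.ne'
  -- derivative of exponential part
  have hE : HasDerivAt (fun v => Real.exp (-b ^ 2 * v / 2))
      (-b ^ 2 / 2 * Real.exp (-b ^ 2 * v / 2)) v := by
    have h1 : HasDerivAt (fun v : ℝ => -b ^ 2 * v / 2) (-b ^ 2 / 2) v := by
      simpa using (((hasDerivAt_id v).const_mul (-b ^ 2)).div_const 2)
    simpa [mul_comm] using h1.exp
  -- derivative of Phi (b * sqrt v)
  have hP : HasDerivAt (fun v => Phi (b * Real.sqrt v))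
      (phid (b * Real.sqrt v) * (b * (1 / (2 * Real.sqrt v)))) v := by
    have h1 : HasDerivAt (fun v => b * Real.sqrt v) (b * (1 / (2 * Real.sqrt v))) v :=
      hS.const_mul b
    exact (hasDerivAt_Phi_s3 _).comp v h1
  -- derivative of sqrt(2 pi v)
  have hSq : HasDerivAt (fun v => Real.sqrt (2 * Real.pi * v))
      (Real.sqrt (2 * Real.pi) * (1 / (2 * Real.sqrt v))) v := by
    have heq : (fun v : ℝ => Real.sqrt (2 * Real.pi * v))
        = fun v => Real.sqrt (2 * Real.pi) * Real.sqrt v := by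
      funext x; exact Real.sqrt_mul (by positivity) x
    rw [heq]; exact hS.const_mul _
  -- derivative of G
  have hG : HasDerivAt (fun v => Real.exp (-b ^ 2 * v / 2) +
      b / 2 * Real.sqrt (2 * Real.pi * v) * (2 * Phi (b * Real.sqrt v) - 1))
      (-b ^ 2 / 2 * Real.exp (-b ^ 2 * v / 2) +
        (b / 2 * (Real.sqrt (2 * Real.pi) * (1 / (2 * Real.sqrt v))) * (2 * Phi (b * Real.sqrt v) - 1)
          + b / 2 * Real.sqrt (2 * Real.pi * v) * (2 * (phid (b * Real.sqrt v) * (b * (1 / (2 * Real.sqrt v))))))) v := by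
    exact hE.add (((hSq.const_mul (b/2)).mul ((hP.const_mul 2).sub_const 1)))
  have hD := hG.div hS hr.ne'
  convert hD using 1
  · rfl
  · rfl
  · rfl
  -- algebra
  have hphid : phid (b * Real.sqrt v) = Real.exp (-b ^ 2 * v / 2) / Real.sqrt (2 * Real.pi) := by
    unfold phid
    rw [mul_pow, hr2]; ring_nf
  have hsq2 : Real.sqrt (2 * Real.pi * v) = Real.sqrt (2 * Real.pi) * Real.sqrt v :=
    Real.sqrt_mul (by positivity) v
  rw [hphid, hsq2]
  have h2pi : Real.sqrt (2 * Real.pi) ^ 2 = 2 * Real.pi := Real.sq_sqrt (by positivity)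
  field_simp
  rw [hr2]; ring

lemma strictAntiOn_hfun (b : ℝ) : StrictAntiOn (hfun b) (Set.Ioi 0) := by
  refine strictAntiOn_of_deriv_neg (convex_Ioi 0) ?_ ?_
  · intro x hx
    exact (hasDerivAt_hfun b hx).continuousAt.continuousWithinAt
  · intro x hx
    rw [interior_Ioi] at hx
    rw [(hasDerivAt_hfun b hx).deriv]
    have h1 : (0:ℝ) < Real.sqrt x := Real.sqrt_pos.2 hx
    have hx' : (0:ℝ) < x := hx
    have : (0:ℝ) < 2 * x * Real.sqrt x := by positivity
    exact div_neg_of_neg_of_pos (by linarith [Real.exp_pos (-b ^ 2 * x / 2)]) this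

lemma psi_eq (b T u : ℝ) (hu : 0 < u) (hT : u < T) :
    psi b T u = Real.exp (-b ^ 2 * u / 2) / (Real.pi * Real.sqrt u) * hfun b (T - u) := by
  unfold psi hfun
  have h1 : Real.sqrt (u * (T - u)) = Real.sqrt u * Real.sqrt (T - u) := Real.sqrt_mul hu.le _
  have h2 : (0:ℝ) < Real.sqrt u := Real.sqrt_pos.2 hu
  have h3 : (0:ℝ) < Real.sqrt (T - u) := Real.sqrt_pos.2 (by linarith)
  rw [h1]
  have hpi := Real.pi_pos
  rw [div_mul_eq_mul_div, div_mul_div_comm]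
  congr 1
  ring

lemma continuous_Phi : Continuous Phi :=
  continuous_iff_continuousAt.2 fun y => (hasDerivAt_Phi_s3 y).continuousAt

noncomputable def Gfun (b v : ℝ) : ℝ :=
  Real.exp (-b ^ 2 * v / 2) +
    b / 2 * Real.sqrt (2 * Real.pi * v) * (2 * Phi (b * Real.sqrt v) - 1)

lemma continuous_Gfun (b : ℝ) : Continuous (Gfun b) := by
  unfold Gfun
  have h1 : Continuous fun v : ℝ => Phi (b * Real.sqrt v) :=
    continuous_Phi.comp (continuous_const.mul Real.continuous_sqrt)
  fun_prop

lemma psi_eq_Gfun (b T u : ℝ) : psi b T u =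
    Real.exp (-b ^ 2 * u / 2) / (Real.pi * Real.sqrt (u * (T - u))) * Gfun b (T - u) := rfl

lemma integrableOn_psi (b s T : ℝ) (hs : 0 < s) (hT : s < T) :
    IntegrableOn (psi b T) (Set.Ioc 0 s) := by
  obtain ⟨C, hC⟩ := (isCompact_Icc : IsCompact (Set.Icc (T - s) T)).exists_bound_of_continuousOn
    (continuous_Gfun b).continuousOn
  have hC0 : 0 ≤ C := le_trans (norm_nonneg _) (hC T ⟨by linarith, le_refl T⟩)
  have hTs : (0:ℝ) < Real.sqrt (T - s) := Real.sqrt_pos.2 (by linarith)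
  have hpi := Real.pi_pos
  set M := C / (Real.pi * Real.sqrt (T - s)) with hMdef
  have hM : 0 ≤ M := div_nonneg hC0 (by positivity)
  -- integrability of the dominating function
  have hg : IntegrableOn (fun u : ℝ => M * u ^ (-(1/2) : ℝ)) (Set.Ioc 0 s) := by
    have := (intervalIntegral.intervalIntegrable_rpow' (a := 0) (b := s)
      (r := -(1/2)) (by norm_num))
    exact ((intervalIntegrable_iff_integrableOn_Ioc_of_le hs.le).1 this).const_mul M
  -- continuity of psi on the set
  have hcont : ContinuousOn (psi b T) (Set.Ioc 0 s) := by
    have hne : ∀ u ∈ Set.Ioc (0:ℝ) s, Real.pi * Real.sqrt (u * (T - u)) ≠ 0 := by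
      intro u hu
      have : (0:ℝ) < Real.sqrt (u * (T - u)) :=
        Real.sqrt_pos.2 (mul_pos hu.1 (by linarith [hu.2]))
      positivity
    have : ContinuousOn (fun u : ℝ =>
        Real.exp (-b ^ 2 * u / 2) / (Real.pi * Real.sqrt (u * (T - u))) * Gfun b (T - u))
        (Set.Ioc 0 s) := by
      apply ContinuousOn.mul
      · exact ContinuousOn.div (by fun_prop) (by fun_prop) hne
      · exact ((continuous_Gfun b).comp (continuous_const.sub continuous_id)).continuousOn
    exact this
  refine Integrable.mono hg (hcont.aestronglyMeasurable measurableSet_Ioc) ?_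
  rw [ae_restrict_iff' measurableSet_Ioc]
  refine Filter.Eventually.of_forall fun u hu => ?_
  have hu0 : (0:ℝ) < u := hu.1
  have hru : (0:ℝ) < Real.sqrt u := Real.sqrt_pos.2 hu0
  have hTu : (0:ℝ) < T - u := by linarith [hu.2]
  have hrTu : (0:ℝ) < Real.sqrt (T - u) := Real.sqrt_pos.2 hTu
  have hrpow : u ^ (-(1/2) : ℝ) = (Real.sqrt u)⁻¹ := by
    rw [Real.sqrt_eq_rpow, ← Real.rpow_neg hu0.le]
  rw [psi_eq_Gfun]
  have hsqmul : Real.sqrt (u * (T - u)) = Real.sqrt u * Real.sqrt (T - u) :=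
    Real.sqrt_mul hu0.le _
  have hfac : (0:ℝ) ≤ Real.exp (-b ^ 2 * u / 2) / (Real.pi * Real.sqrt (u * (T - u))) := by
    have : (0:ℝ) < Real.sqrt (u * (T - u)) := by rw [hsqmul]; positivity
    positivity
  have step1 : ‖Real.exp (-b ^ 2 * u / 2) / (Real.pi * Real.sqrt (u * (T - u))) * Gfun b (T - u)‖
      ≤ Real.exp (-b ^ 2 * u / 2) / (Real.pi * Real.sqrt (u * (T - u))) * C := by
    rw [norm_mul, Real.norm_of_nonneg hfac]
    exact mul_le_mul_of_nonneg_left (hC _ ⟨by linarith [hu.2], by linarith⟩) hfac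
  have step2 : Real.exp (-b ^ 2 * u / 2) / (Real.pi * Real.sqrt (u * (T - u))) * C
      ≤ M * u ^ (-(1/2) : ℝ) := by
    have hexp : Real.exp (-b ^ 2 * u / 2) ≤ 1 := by
      rw [← Real.exp_zero]
      apply Real.exp_le_exp.2
      nlinarith [sq_nonneg b]
    have hden : Real.pi * Real.sqrt (T - s) * Real.sqrt u ≤ Real.pi * Real.sqrt (u * (T - u)) := by
      rw [hsqmul]
      have h' : Real.sqrt (T - s) ≤ Real.sqrt (T - u) := Real.sqrt_le_sqrt (by linarith [hu.2])
      nlinarith [mul_le_mul_of_nonneg_left h' hru.le, hpi]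
    have hdiv : Real.exp (-b ^ 2 * u / 2) / (Real.pi * Real.sqrt (u * (T - u)))
        ≤ 1 / (Real.pi * Real.sqrt (T - s) * Real.sqrt u) :=
      div_le_div₀ (by norm_num) hexp (by positivity) hden
    calc Real.exp (-b ^ 2 * u / 2) / (Real.pi * Real.sqrt (u * (T - u))) * C
        ≤ 1 / (Real.pi * Real.sqrt (T - s) * Real.sqrt u) * C :=
          mul_le_mul_of_nonneg_right hdiv hC0
      _ = M * u ^ (-(1/2) : ℝ) := by
          rw [hrpow, hMdef]; field_simp
  have hMrpow : ‖M * u ^ (-(1/2) : ℝ)‖ = M * u ^ (-(1/2) : ℝ) := by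
    rw [Real.norm_of_nonneg]
    exact mul_nonneg hM (by rw [hrpow]; positivity)
  rw [hMrpow]
  exact step1.trans step2

lemma psi_lt (b s : ℝ) (hs : 0 < s) {T₁ T₂ u : ℝ} (h1 : s < T₁) (h12 : T₁ < T₂)
    (hu : u ∈ Set.Ioc (0:ℝ) s) : psi b T₂ u < psi b T₁ u := by
  have hu0 : (0:ℝ) < u := hu.1
  have hu1 : u < T₁ := lt_of_le_of_lt hu.2 h1
  have hu2 : u < T₂ := hu1.trans h12
  rw [psi_eq b T₁ u hu0 hu1, psi_eq b T₂ u hu0 hu2]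
  have hfac : (0:ℝ) < Real.exp (-b ^ 2 * u / 2) / (Real.pi * Real.sqrt u) := by
    have := Real.sqrt_pos.2 hu0
    have := Real.pi_pos
    positivity
  refine mul_lt_mul_of_pos_left ?_ hfac
  exact strictAntiOn_hfun b (Set.mem_Ioi.2 (by linarith)) (Set.mem_Ioi.2 (by linarith))
    (by linarith)

lemma key_s3 (b s : ℝ) (hs : 0 < s) {T₁ T₂ : ℝ} (h1 : s < T₁) (h12 : T₁ < T₂) :
    ∫ y in (0:ℝ)..s, psi b T₂ y < ∫ y in (0:ℝ)..s, psi b T₁ y := by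
  rw [intervalIntegral.integral_of_le hs.le, intervalIntegral.integral_of_le hs.le]
  have hint1 := integrableOn_psi b s T₁ hs h1
  have hint2 := integrableOn_psi b s T₂ hs (h1.trans h12)
  have hpos : 0 < ∫ y in Set.Ioc (0:ℝ) s, (psi b T₁ y - psi b T₂ y) := by
    rw [show (fun y => psi b T₁ y - psi b T₂ y) = (psi b T₁ - psi b T₂) from rfl] at *
    rw [setIntegral_pos_iff_support_of_nonneg_ae ?_ (hint1.sub hint2)]
    · have hsub : Set.Ioc (0:ℝ) s ⊆ Function.support (fun y => psi b T₁ y - psi b T₂ y) :=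
        fun u hu => (sub_pos.2 (psi_lt b s hs h1 h12 hu)).ne'
      calc (0:ENNReal) < volume (Set.Ioc (0:ℝ) s) := by
            rw [Real.volume_Ioc]; simp [hs]
        _ ≤ volume (Function.support (fun y => psi b T₁ y - psi b T₂ y) ∩ Set.Ioc 0 s) :=
            measure_mono (Set.subset_inter hsub (subset_refl _))
    · filter_upwards [ae_restrict_mem measurableSet_Ioc] with u hu
      exact sub_nonneg.2 (psi_lt b s hs h1 h12 hu).le
  rw [integral_sub hint1 hint2] at hpos
  linarith

/-- for `b ≤ 0` and `s > 0`, the function `t ↦ ∫_0^s ψ_{s+t}(y) dy` is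
strictly decreasing on `(0, ∞)`. -/
theorem stmt_3 (b s : ℝ) (hb : b ≤ 0) (hs : 0 < s) :
    StrictAntiOn (fun t : ℝ => ∫ y in (0:ℝ)..s, psi b (s + t) y) (Set.Ioi 0) := by
  intro t₁ ht₁ t₂ ht₂ hlt
  have h1 : s < s + t₁ := by have := Set.mem_Ioi.1 ht₁; linarith
  exact key_s3 b s hs h1 (by linarith)
end

section
/- Let x < a. Then ∫_0^∞ (1/(πt)) · [ ∫_0^t ((a−x)/(√(2π)·s·√(t−s))) · e^{−(a−x)²/(2s)} ds ] dt = 1; that is, for b = 0 the density f_{τ₂}(t) = (1/(πt)) ∫_0^t (a−x)·e^{−(a−x)²/(2s)}/(√(2π)·s·√(t−s)) ds of the second-passage time of Brownian motion through the constant level a is non-defective. -/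
open MeasureTheory

section Stmt14Aux

open Set Real MeasureTheory
open scoped ENNReal


lemma aux_inj (s : ℝ) (hs : 0 < s) : InjOn (fun w : ℝ => s * (1 + w ^ 2)) (Ioi 0) := by
  intro p hp q hq h
  simp only [mem_Ioi] at hp hq
  simp only at h
  have h2 : p ^ 2 = q ^ 2 := by
    have hs' := hs.ne'
    field_simp at h
    linarith
  nlinarith [sq_nonneg (p - q), sq_nonneg (p + q)]

lemma aux_img (s : ℝ) (hs : 0 < s) : (fun w : ℝ => s * (1 + w ^ 2)) '' (Ioi 0) = Ioi s := by
  ext t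
  constructor
  · rintro ⟨w, hw, rfl⟩
    simp only [mem_Ioi] at hw ⊢
    nlinarith [mul_pos hs (pow_pos hw 2)]
  · intro ht
    simp only [mem_Ioi] at ht
    refine ⟨Real.sqrt (t / s - 1), ?_, ?_⟩
    · simp only [mem_Ioi]
      apply Real.sqrt_pos.mpr
      rw [sub_pos, lt_div_iff₀ hs]
      linarith
    · simp only
      rw [Real.sq_sqrt (by rw [sub_nonneg, le_div_iff₀ hs]; linarith)]
      field_simp
      ring

lemma aux_deriv (s : ℝ) : ∀ w ∈ Ioi (0:ℝ), HasDerivWithinAt (fun w : ℝ => s * (1 + w ^ 2))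
    (2 * s * w) (Ioi 0) w := by
  intro w _
  have : HasDerivAt (fun w : ℝ => s * (1 + w ^ 2)) (s * (2 * w ^ 1)) w :=
    (((hasDerivAt_pow 2 w).const_add 1).const_mul s)
  rw [show 2 * s * w = s * (2 * w ^ 1) by ring]
  exact this.hasDerivWithinAt

lemma L1 (s : ℝ) (hs : 0 < s) :
    IntegrableOn (fun t : ℝ => 1 / (Real.pi * t * Real.sqrt (t - s))) (Ioi s) ∧
    ∫ t in Ioi s, 1 / (Real.pi * t * Real.sqrt (t - s)) = 1 / Real.sqrt s := by
  have hss : Real.sqrt s ≠ 0 := by positivity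
  have heq : EqOn (fun w : ℝ => |2 * s * w| •
      (1 / (Real.pi * (s * (1 + w ^ 2)) * Real.sqrt (s * (1 + w ^ 2) - s))))
      (fun w : ℝ => (2 / (Real.pi * Real.sqrt s)) * (1 + w ^ 2)⁻¹) (Ioi 0) := by
    intro w hw
    simp only [mem_Ioi] at hw
    simp only [smul_eq_mul]
    rw [show s * (1 + w ^ 2) - s = s * w ^ 2 by ring, Real.sqrt_mul hs.le,
      Real.sqrt_sq hw.le, abs_of_pos (by positivity)]
    have h1 : (0:ℝ) < 1 + w ^ 2 := by positivity
    field_simp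
  have hint : IntegrableOn (fun w : ℝ => (2 / (Real.pi * Real.sqrt s)) * (1 + w ^ 2)⁻¹)
      (Ioi 0) := integrable_inv_one_add_sq.integrableOn.const_mul _
  constructor
  · rw [← aux_img s hs,
      integrableOn_image_iff_integrableOn_abs_deriv_smul measurableSet_Ioi (aux_deriv s)
        (aux_inj s hs)]
    exact hint.congr_fun (fun w hw => (heq hw).symm) measurableSet_Ioi
  · rw [← aux_img s hs,
      integral_image_eq_integral_abs_deriv_smul measurableSet_Ioi (aux_deriv s) (aux_inj s hs),
      setIntegral_congr_fun measurableSet_Ioi heq, integral_const_mul,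
      integral_Ioi_inv_one_add_sq, Real.arctan_zero, sub_zero]
    field_simp


lemma aux2_inj (c : ℝ) (hc : 0 < c) : InjOn (fun u : ℝ => c ^ 2 / u ^ 2) (Ioi 0) := by
  intro p hp q hq h
  simp only [mem_Ioi] at hp hq
  simp only at h
  have hc' : c ≠ 0 := hc.ne'
  have hp2 : p ^ 2 ≠ 0 := by positivity
  have hq2 : q ^ 2 ≠ 0 := by positivity
  have h2 : p ^ 2 = q ^ 2 := by
    rw [div_eq_div_iff hp2 hq2] at h
    have := mul_left_cancel₀ (pow_ne_zero 2 hc') h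
    linarith
  nlinarith [sq_nonneg (p - q), sq_nonneg (p + q)]

lemma aux2_img (c : ℝ) (hc : 0 < c) : (fun u : ℝ => c ^ 2 / u ^ 2) '' (Ioi 0) = Ioi 0 := by
  ext t
  constructor
  · rintro ⟨u, hu, rfl⟩
    simp only [mem_Ioi] at hu ⊢
    positivity
  · intro ht
    simp only [mem_Ioi] at ht
    refine ⟨c / Real.sqrt t, mem_Ioi.mpr (by positivity), ?_⟩
    simp only
    rw [div_pow, Real.sq_sqrt ht.le]
    have : Real.sqrt t ≠ 0 := by positivity
    field_simp

lemma aux2_deriv (c : ℝ) : ∀ u ∈ Ioi (0:ℝ), HasDerivWithinAt (fun u : ℝ => c ^ 2 / u ^ 2)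
    (-(2 * c ^ 2 / u ^ 3)) (Ioi 0) u := by
  intro u hu
  simp only [mem_Ioi] at hu
  have hu2 : u ^ 2 ≠ 0 := by positivity
  have : HasDerivAt (fun u : ℝ => c ^ 2 * (u ^ 2)⁻¹)
      (c ^ 2 * (-(2 * u ^ 1) / (u ^ 2) ^ 2)) u := ((hasDerivAt_pow 2 u).inv hu2).const_mul _
  have h2 : HasDerivAt (fun u : ℝ => c ^ 2 / u ^ 2) (c ^ 2 * (-(2 * u ^ 1) / (u ^ 2) ^ 2)) u := by
    simpa [div_eq_mul_inv] using this
  rw [show -(2 * c ^ 2 / u ^ 3) = c ^ 2 * (-(2 * u ^ 1) / (u ^ 2) ^ 2) by field_simp <;> ring]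
  exact h2.hasDerivWithinAt

lemma L2 (c : ℝ) (hc : 0 < c) :
    IntegrableOn (fun s : ℝ => c / (Real.sqrt (2 * Real.pi) * s * Real.sqrt s) *
      Real.exp (-c ^ 2 / (2 * s))) (Ioi 0) ∧
    ∫ s in Ioi (0:ℝ), c / (Real.sqrt (2 * Real.pi) * s * Real.sqrt s) *
      Real.exp (-c ^ 2 / (2 * s)) = 1 := by
  have h2pi : Real.sqrt (2 * Real.pi) ≠ 0 := by positivity
  have heq : EqOn (fun u : ℝ => |(-(2 * c ^ 2 / u ^ 3))| •
      (c / (Real.sqrt (2 * Real.pi) * (c ^ 2 / u ^ 2) * Real.sqrt (c ^ 2 / u ^ 2)) *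
        Real.exp (-c ^ 2 / (2 * (c ^ 2 / u ^ 2)))))
      (fun u : ℝ => (2 / Real.sqrt (2 * Real.pi)) * Real.exp (-(2⁻¹) * u ^ 2)) (Ioi 0) := by
    intro u hu
    simp only [mem_Ioi] at hu
    have hu' : u ≠ 0 := hu.ne'
    have hc' : c ≠ 0 := hc.ne'
    simp only [smul_eq_mul]
    rw [abs_neg, abs_of_pos (by positivity)]
    rw [show Real.sqrt (c ^ 2 / u ^ 2) = c / u by
      rw [show c ^ 2 / u ^ 2 = (c / u) ^ 2 by ring, Real.sqrt_sq (by positivity)]]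
    rw [show -c ^ 2 / (2 * (c ^ 2 / u ^ 2)) = -(2⁻¹) * u ^ 2 by field_simp]
    field_simp
  have hgauss : ∫ u in Ioi (0:ℝ), Real.exp (-(2⁻¹) * u ^ 2) = Real.sqrt (2 * Real.pi) / 2 := by
    rw [integral_gaussian_Ioi]
    norm_num
    ring
  have hint : IntegrableOn (fun u : ℝ => (2 / Real.sqrt (2 * Real.pi)) *
      Real.exp (-(2⁻¹) * u ^ 2)) (Ioi 0) :=
    ((integrable_exp_neg_mul_sq (by norm_num : (0:ℝ) < 2⁻¹)).integrableOn.const_mul _)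
  constructor
  · rw [← aux2_img c hc,
      integrableOn_image_iff_integrableOn_abs_deriv_smul measurableSet_Ioi (aux2_deriv c)
        (aux2_inj c hc)]
    exact hint.congr_fun (fun u hu => (heq hu).symm) measurableSet_Ioi
  · rw [← aux2_img c hc,
      integral_image_eq_integral_abs_deriv_smul measurableSet_Ioi (aux2_deriv c) (aux2_inj c hc),
      setIntegral_congr_fun measurableSet_Ioi heq, integral_const_mul, hgauss]
    field_simp

lemma L3 (c t : ℝ) (hc : 0 < c) (ht : 0 < t) :
    IntegrableOn (fun s : ℝ => c / (Real.sqrt (2 * Real.pi) * s * Real.sqrt (t - s)) *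
      Real.exp (-c ^ 2 / (2 * s))) (Ioo 0 t) := by
  have hg : IntegrableOn (fun s : ℝ => (2 / (c * Real.sqrt (2 * Real.pi))) *
      (t - s) ^ (-(1/2) : ℝ)) (Ioo 0 t) := by
    have h1 : IntervalIntegrable (fun x : ℝ => x ^ (-(1/2) : ℝ)) volume 0 t :=
      intervalIntegral.intervalIntegrable_rpow' (by norm_num)
    have h2 := (h1.comp_sub_left t).symm
    simp only [sub_self, sub_zero] at h2
    have h3 : IntegrableOn (fun x : ℝ => (t - x) ^ (-(1/2) : ℝ)) (Ioc 0 t) := by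
      rw [intervalIntegrable_iff_integrableOn_Ioc_of_le ht.le] at h2
      exact h2
    exact (h3.mono_set Ioo_subset_Ioc_self).const_mul _
  apply hg.integrable.mono'
  · apply Measurable.aestronglyMeasurable
    fun_prop
  · rw [ae_restrict_iff' measurableSet_Ioo]
    refine ae_of_all _ fun s hs => ?_
    obtain ⟨hs0, hst⟩ := hs
    have hts : 0 < t - s := by linarith
    have hkey : Real.exp (-c ^ 2 / (2 * s)) ≤ 2 * s / c ^ 2 := by
      rw [show -c ^ 2 / (2 * s) = -(c ^ 2 / (2 * s)) by ring, Real.exp_neg,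
        inv_le_comm₀ (Real.exp_pos _) (by positivity), inv_div]
      calc c ^ 2 / (2 * s) ≤ c ^ 2 / (2 * s) + 1 := by linarith
      _ ≤ Real.exp (c ^ 2 / (2 * s)) := Real.add_one_le_exp _
    rw [Real.norm_eq_abs, abs_of_nonneg (by positivity)]
    have hrw : (t - s) ^ (-(1/2) : ℝ) = (Real.sqrt (t - s))⁻¹ := by
      rw [Real.rpow_neg hts.le, Real.sqrt_eq_rpow]
    rw [hrw]
    have hD : (0:ℝ) < Real.sqrt (2 * Real.pi) * s * Real.sqrt (t - s) := by positivity
    have hRHS : 2 / (c * Real.sqrt (2 * Real.pi)) * (Real.sqrt (t - s))⁻¹ =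
        (2 * s / c) / (Real.sqrt (2 * Real.pi) * s * Real.sqrt (t - s)) := by
      field_simp
    have hLHS : c / (Real.sqrt (2 * Real.pi) * s * Real.sqrt (t - s)) *
        Real.exp (-c ^ 2 / (2 * s)) =
        (c * Real.exp (-c ^ 2 / (2 * s))) / (Real.sqrt (2 * Real.pi) * s * Real.sqrt (t - s)) := by
      ring
    rw [hLHS, hRHS]
    gcongr
    calc c * Real.exp (-c ^ 2 / (2 * s)) ≤ c * (2 * s / c ^ 2) :=
          mul_le_mul_of_nonneg_left hkey hc.le
      _ = 2 * s / c := by field_simp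

/-- for `b = 0` and `x < a`, the density of the second-passage time of
Brownian motion through the constant level `a`,
`f_{τ₂}(t) = (1/(πt)) ∫_0^t (a-x) e^{-(a-x)²/(2s)}/(√(2π) s √(t-s)) ds`,
is non-defective. -/
theorem stmt_14 (a x : ℝ) (hx : x < a) :
    (∫ t in Set.Ioi (0:ℝ), 1 / (Real.pi * t) *
        ∫ s in (0:ℝ)..t,
          (a - x) / (Real.sqrt (2 * Real.pi) * s * Real.sqrt (t - s)) *
            Real.exp (-(a - x) ^ 2 / (2 * s))) = 1 := by
  set c : ℝ := a - x with hcdef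
  have hc : 0 < c := sub_pos.mpr hx
  set φ : ℝ → ℝ → ℝ := fun t s =>
    c / (Real.sqrt (2 * Real.pi) * s * Real.sqrt (t - s)) * Real.exp (-c ^ 2 / (2 * s))
    with hφdef
  set F : ℝ × ℝ → ℝ := fun p =>
    if 0 < p.2 ∧ p.2 < p.1 then 1 / (Real.pi * p.1) * φ p.1 p.2 else 0 with hFdef
  set G : ℝ × ℝ → ℝ≥0∞ := fun p => ENNReal.ofReal (F p) with hGdef
  have hFm : Measurable F := by
    apply Measurable.ite
    · exact (measurableSet_lt measurable_const measurable_snd).inter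
        (measurableSet_lt measurable_snd measurable_fst)
    · fun_prop
    · exact measurable_const
  have hGm : Measurable G := ENNReal.measurable_ofReal.comp hFm
  set g : ℝ → ℝ := fun t => 1 / (Real.pi * t) * ∫ s in Ioo (0:ℝ) t, φ t s with hgdef
  -- Step 1: replace the interval integral by the Ioo set integral
  have hstep1 : EqOn (fun t : ℝ => 1 / (Real.pi * t) * ∫ s in (0:ℝ)..t, φ t s) g (Ioi 0) := by
    intro t ht
    simp only [mem_Ioi] at ht
    simp only [hgdef]
    rw [intervalIntegral.integral_of_le ht.le, integral_Ioc_eq_integral_Ioo]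
  rw [setIntegral_congr_fun measurableSet_Ioi hstep1]
  -- nonnegativity of g on Ioi 0
  have hgnn : ∀ t ∈ Ioi (0:ℝ), 0 ≤ g t := by
    intro t ht
    simp only [mem_Ioi] at ht
    apply mul_nonneg (by positivity)
    apply setIntegral_nonneg measurableSet_Ioo
    intro s hs
    obtain ⟨hs0, hst⟩ := hs
    have : 0 ≤ t - s := by linarith
    positivity
  -- measurability of g
  have hgm : Measurable g := by
    set F0 : ℝ × ℝ → ℝ := fun p => if 0 < p.2 ∧ p.2 < p.1 then φ p.1 p.2 else 0 with hF0def
    have hF0m : StronglyMeasurable F0 := by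
      apply Measurable.stronglyMeasurable
      apply Measurable.ite
      · exact (measurableSet_lt measurable_const measurable_snd).inter
          (measurableSet_lt measurable_snd measurable_fst)
      · fun_prop
      · exact measurable_const
    have hrepr : ∀ t : ℝ, (∫ s in Ioo (0:ℝ) t, φ t s) = ∫ s, F0 (t, s) := by
      intro t
      rw [← integral_indicator measurableSet_Ioo]
      congr 1
      funext s
      simp only [hF0def, Set.indicator_apply, mem_Ioo]
    have : g = fun t => 1 / (Real.pi * t) * ∫ s, F0 (t, s) := by
      funext t; rw [hgdef]; simp only; rw [hrepr]
    rw [this]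
    exact (measurable_const.div (measurable_const.mul measurable_id)).mul
      hF0m.integral_prod_right'.measurable
  -- pass to the lower Lebesgue integral
  rw [integral_eq_lintegral_of_nonneg_ae
    ((ae_restrict_iff' measurableSet_Ioi).mpr (ae_of_all _ hgnn))
    hgm.aestronglyMeasurable]
  suffices hkey : ∫⁻ t in Ioi (0:ℝ), ENNReal.ofReal (g t) = 1 by
    rw [hkey]; simp
  -- rewrite the integrand as an iterated lower integral
  have hstep2 : ∫⁻ t in Ioi (0:ℝ), ENNReal.ofReal (g t)
      = ∫⁻ t in Ioi (0:ℝ), ∫⁻ s in Ioi (0:ℝ), G (t, s) := by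
    apply setLIntegral_congr_fun measurableSet_Ioi
    intro t ht
    simp only [mem_Ioi] at ht
    have hpit : (0:ℝ) ≤ 1 / (Real.pi * t) := by positivity
    have hφnn : 0 ≤ᵐ[volume.restrict (Ioo (0:ℝ) t)] φ t := by
      filter_upwards [ae_restrict_mem measurableSet_Ioo] with s hs
      obtain ⟨hs0, hst⟩ := hs
      have h1 : 0 ≤ t - s := by linarith
      have h2 : (0:ℝ) ≤ c / (Real.sqrt (2 * Real.pi) * s * Real.sqrt (t - s)) *
          Real.exp (-c ^ 2 / (2 * s)) := by positivity
      exact h2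
    have hL3 : IntegrableOn (φ t) (Ioo (0:ℝ) t) := L3 c t hc ht
    rw [hgdef]
    simp only
    rw [ENNReal.ofReal_mul hpit, ofReal_integral_eq_lintegral_ofReal hL3 hφnn,
      ← lintegral_const_mul' _ _ ENNReal.ofReal_ne_top,
      ← lintegral_indicator measurableSet_Ioo, ← lintegral_indicator measurableSet_Ioi]
    congr 1
    funext s
    by_cases hs : s ∈ Ioo (0:ℝ) t
    · rw [Set.indicator_of_mem hs, Set.indicator_of_mem (mem_Ioi.mpr hs.1)]
      simp only [hGdef, hFdef]
      rw [if_pos ⟨hs.1, hs.2⟩, ENNReal.ofReal_mul hpit]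
    · rw [Set.indicator_of_notMem hs]
      by_cases hs' : s ∈ Ioi (0:ℝ)
      · rw [Set.indicator_of_mem hs']
        simp only [hGdef, hFdef]
        rw [if_neg (fun h => hs ⟨h.1, h.2⟩), ENNReal.ofReal_zero]
      · rw [Set.indicator_of_notMem hs']
  rw [hstep2, lintegral_lintegral_swap (hGm.aemeasurable)]
  -- compute the inner integral over t for fixed s
  have hstep3 : ∀ s ∈ Ioi (0:ℝ), (∫⁻ t in Ioi (0:ℝ), G (t, s))
      = ENNReal.ofReal (c / (Real.sqrt (2 * Real.pi) * s * Real.sqrt s) *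
          Real.exp (-c ^ 2 / (2 * s))) := by
    intro s hs
    simp only [mem_Ioi] at hs
    set K : ℝ := c * Real.exp (-c ^ 2 / (2 * s)) / (Real.sqrt (2 * Real.pi) * s) with hKdef
    have hKnn : 0 ≤ K := by positivity
    have h1 : (∫⁻ t in Ioi (0:ℝ), G (t, s))
        = ∫⁻ t in Ioi s, ENNReal.ofReal K
            * ENNReal.ofReal (1 / (Real.pi * t * Real.sqrt (t - s))) := by
      rw [← lintegral_indicator measurableSet_Ioi, ← lintegral_indicator measurableSet_Ioi]
      congr 1
      funext t
      by_cases ht : t ∈ Ioi s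
      · simp only [mem_Ioi] at ht
        have ht0 : t ∈ Ioi (0:ℝ) := mem_Ioi.mpr (hs.trans ht)
        rw [Set.indicator_of_mem ht0, Set.indicator_of_mem (mem_Ioi.mpr ht)]
        simp only [hGdef, hFdef, hφdef]
        rw [if_pos ⟨hs, ht⟩, ← ENNReal.ofReal_mul hKnn]
        congr 1
        rw [hKdef]
        ring
      · simp only [mem_Ioi, not_lt] at ht
        rw [Set.indicator_of_notMem (by simpa using ht : t ∉ Ioi s)]
        by_cases ht0 : t ∈ Ioi (0:ℝ)
        · rw [Set.indicator_of_mem ht0]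
          simp only [hGdef, hFdef]
          rw [if_neg (fun h => absurd h.2 (not_lt.mpr ht)), ENNReal.ofReal_zero]
        · rw [Set.indicator_of_notMem ht0]
    have hnn2 : 0 ≤ᵐ[volume.restrict (Ioi s)]
        fun t : ℝ => 1 / (Real.pi * t * Real.sqrt (t - s)) := by
      filter_upwards [ae_restrict_mem measurableSet_Ioi] with t ht
      simp only [mem_Ioi] at ht
      have h0t : 0 < t := hs.trans ht
      have h1t : 0 ≤ t - s := by linarith
      positivity
    rw [h1, lintegral_const_mul' _ _ ENNReal.ofReal_ne_top,
      ← ofReal_integral_eq_lintegral_ofReal (L1 s hs).1 hnn2, (L1 s hs).2,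
      ← ENNReal.ofReal_mul hKnn]
    congr 1
    rw [hKdef]
    have h2 : Real.sqrt s ≠ 0 := by positivity
    have h3 : Real.sqrt (2 * Real.pi) ≠ 0 := by positivity
    field_simp
  rw [setLIntegral_congr_fun measurableSet_Ioi hstep3]
  -- conclude with the outer integral
  have hnn3 : 0 ≤ᵐ[volume.restrict (Ioi (0:ℝ))]
      fun s : ℝ => c / (Real.sqrt (2 * Real.pi) * s * Real.sqrt s) *
        Real.exp (-c ^ 2 / (2 * s)) := by
    filter_upwards [ae_restrict_mem measurableSet_Ioi] with s hs
    simp only [mem_Ioi] at hs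
    positivity
  rw [← ofReal_integral_eq_lintegral_ofReal (L2 c hc).1 hnn3, (L2 c hc).2, ENNReal.ofReal_one]

end Stmt14Aux
end
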